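/- For a prime p, the binomial coefficient C(m, n) is not divisible by p if and only if every base-p digit of n is less than or equal to the corresponding base-p digit of m. -/

import Mathlib

open Nat Finset

lemma digit_dvd_choose_iff {p : ℕ} (hp : p.Prime) {a b : ℕ} (ha : a < p) :
    p ∣ a.choose b ↔ ¬ b ≤ a := by
  constructor
  · intro hdvd hba
    have h := Nat.choose_mul_factorial_mul_factorial hba
    have : p ∣ a.factorial := h ▸ Dvd.dvd.mul_right (Dvd.dvd.mul_right hdvd _) _
    exact absurd ((Nat.Prime.dvd_factorial hp).mp this) (by omega)
  · intro h
    simp [Nat.choose_eq_zero_of_lt (by omega : a < b)]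

/-- Lucas criterion: `p ∤ C(m,n)` iff every base-`p` digit of `n` is at most
the corresponding digit of `m`. -/
theorem lucas_criterion (p : ℕ) (hp : p.Prime) (m n : ℕ) (hnm : n ≤ m) :
    ¬ p ∣ m.choose n ↔ ∀ i, n / p ^ i % p ≤ m / p ^ i % p := by
  obtain ⟨a, ha⟩ : ∃ a, m < p ^ a := ⟨m + 1, (Nat.lt_pow_self hp.one_lt (n := m)).trans (Nat.pow_lt_pow_succ hp.one_lt)⟩
  have han : n < p ^ a := lt_of_le_of_lt hnm ha
  have : Fact p.Prime := ⟨hp⟩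
  have hmod := Choose.choose_modEq_prod_range_choose_nat ha han
  have hdvd : p ∣ m.choose n ↔ p ∣ ∏ i ∈ range a, (m / p ^ i % p).choose (n / p ^ i % p) := by
    constructor <;> intro h
    · exact (Nat.modEq_zero_iff_dvd).mp ((hmod.symm.trans (Nat.modEq_zero_iff_dvd.mpr h)))
    · exact (Nat.modEq_zero_iff_dvd).mp ((hmod.trans (Nat.modEq_zero_iff_dvd.mpr h)))
  rw [hdvd, hp.prime.dvd_finset_prod_iff]
  push_neg
  constructor
  · intro h i
    by_cases hia : i < a
    · have := h i (mem_range.mpr hia)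
      rw [digit_dvd_choose_iff hp (Nat.mod_lt _ hp.pos)] at this
      omega
    · have : n / p ^ i = 0 := Nat.div_eq_of_lt (lt_of_lt_of_le han (Nat.pow_le_pow_right hp.one_lt.le (by omega)))
      simp [this]
  · intro h i _
    rw [digit_dvd_choose_iff hp (Nat.mod_lt _ hp.pos)]
    exact not_not.mpr (h i)
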